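/- Let L > 0, h > 0, δ := 2Lh, and ρ_B ∈ (0, 1]. Let (Ω, ℱ, P) be a probability space, 𝒢 ⊆ ℱ a sub-σ-algebra, and let a, b, c : Ω → ℝ^d be integrable random vectors such that a - E[b | 𝒢] = (1 - ρ_B)·c almost surely and E‖c‖² < ∞. Form the one-step coupled difference of the VR-HMC update with gradient vectors g := a and g̃ := E[b | 𝒢], i.e., Δx := -(1/2)·(h - (1 - e^{-δ})/(2L))·(g̃ - g) and Δv := -(1/(2L))·(1 - e^{-δ})·(g̃ - g), pointwise on Ω. Then E[‖Δx‖² + ‖Δx + Δv‖²] ≤ (δ²/(4L²))·(1 - ρ_B)²·E‖c‖². -/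

import Mathlib

open MeasureTheory

/-- expected squared one-step coupled difference of the VR-HMC update with
gradient vectors `a` and `E[b | 𝒢]`, under the MSEB bias relation
`a - E[b | 𝒢] = (1 - ρ_B) c` a.s., is bounded by `(δ²/(4L²)) (1-ρ_B)² E‖c‖²`. -/
theorem vrhmc_one_step_bias_bound
    (d : ℕ) (L h : ℝ) (hL : 0 < L) (hh : 0 < h)
    (ρB : ℝ) (hρB : ρB ∈ Set.Ioc (0 : ℝ) 1)
    (δ : ℝ) (hδ : δ = 2 * L * h)
    {Ω : Type*} [inst : MeasurableSpace Ω] (P : Measure Ω) [IsProbabilityMeasure P]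
    (𝒢 : MeasurableSpace Ω) (h𝒢 : 𝒢 ≤ inst)
    (a b c : Ω → EuclideanSpace ℝ (Fin d))
    (ha : Integrable a P) (hb : Integrable b P) (hc : Integrable c P)
    (hc2 : MemLp c 2 P)
    (hbias : ∀ᵐ ω ∂P, a ω - (P[b | 𝒢]) ω = (1 - ρB) • c ω)
    (Δx Δv : Ω → EuclideanSpace ℝ (Fin d))
    (hΔx : ∀ ω, Δx ω =
      (-((1 / 2) * (h - (1 - Real.exp (-δ)) / (2 * L)))) • ((P[b | 𝒢]) ω - a ω))
    (hΔv : ∀ ω, Δv ω =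
      (-((1 / (2 * L)) * (1 - Real.exp (-δ)))) • ((P[b | 𝒢]) ω - a ω)) :
    ∫ ω, (‖Δx ω‖ ^ 2 + ‖Δx ω + Δv ω‖ ^ 2) ∂P ≤
      δ ^ 2 / (4 * L ^ 2) * (1 - ρB) ^ 2 * ∫ ω, ‖c ω‖ ^ 2 ∂P := by
  set α : ℝ := -((1 / 2) * (h - (1 - Real.exp (-δ)) / (2 * L))) with hα
  set β : ℝ := -((1 / (2 * L)) * (1 - Real.exp (-δ))) with hβ
  set K : ℝ := δ ^ 2 / (4 * L ^ 2) * (1 - ρB) ^ 2 with hK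
  have hL2 : (0 : ℝ) < 2 * L := by linarith
  have hδpos : 0 < δ := by rw [hδ]; positivity
  have hE1 : Real.exp (-δ) ≤ 1 := by rw [← Real.exp_zero]; exact Real.exp_le_exp.mpr (by linarith)
  have hE2 : 1 - δ ≤ Real.exp (-δ) := by
    have := Real.add_one_le_exp (-δ); linarith
  have hs0 : 0 ≤ (1 - Real.exp (-δ)) / (2 * L) := by
    apply div_nonneg (by linarith) (by linarith)
  have hsh : (1 - Real.exp (-δ)) / (2 * L) ≤ h := by
    rw [div_le_iff₀ hL2]; nlinarith
  have hcoef : α ^ 2 + (α + β) ^ 2 ≤ δ ^ 2 / (4 * L ^ 2) := by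
    have hδ2 : δ ^ 2 / (4 * L ^ 2) = h ^ 2 := by
      rw [hδ]; field_simp; ring
    have hβs : β = -((1 - Real.exp (-δ)) / (2 * L)) := by
      rw [hβ]; ring
    rw [hδ2, hα, hβs]
    set s := (1 - Real.exp (-δ)) / (2 * L)
    nlinarith [sq_nonneg s, sq_nonneg (h - s), sq_nonneg (h + s)]
  -- pointwise a.e. bound
  have hbnd : ∀ᵐ ω ∂P,
      ‖Δx ω‖ ^ 2 + ‖Δx ω + Δv ω‖ ^ 2 ≤ K * ‖c ω‖ ^ 2 := by
    filter_upwards [hbias] with ω hω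
    have he : (P[b | 𝒢]) ω - a ω = -((1 - ρB) • c ω) := by
      rw [← hω]; abel
    have h1 : ‖Δx ω‖ ^ 2 = α ^ 2 * ((1 - ρB) ^ 2 * ‖c ω‖ ^ 2) := by
      rw [hΔx, he]
      simp only [norm_smul, norm_neg, Real.norm_eq_abs, mul_pow, sq_abs, hα, neg_neg, neg_sq]
    have h2 : ‖Δx ω + Δv ω‖ ^ 2 = (α + β) ^ 2 * ((1 - ρB) ^ 2 * ‖c ω‖ ^ 2) := by
      have : Δx ω + Δv ω = (α + β) • ((P[b | 𝒢]) ω - a ω) := by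
        rw [hΔx, hΔv, add_smul]
      rw [this, he]
      simp only [norm_smul, norm_neg, Real.norm_eq_abs, mul_pow, sq_abs]
    rw [h1, h2, hK]
    have hnn : 0 ≤ (1 - ρB) ^ 2 * ‖c ω‖ ^ 2 := by positivity
    nlinarith [hcoef]
  have hint : Integrable (fun ω => K * ‖c ω‖ ^ 2) P :=
    (hc2.norm.integrable_sq).const_mul K
  have h0 : ∀ᵐ ω ∂P, 0 ≤ ‖Δx ω‖ ^ 2 + ‖Δx ω + Δv ω‖ ^ 2 :=
    Filter.Eventually.of_forall fun ω => by positivity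
  calc ∫ ω, (‖Δx ω‖ ^ 2 + ‖Δx ω + Δv ω‖ ^ 2) ∂P
      ≤ ∫ ω, K * ‖c ω‖ ^ 2 ∂P := integral_mono_of_nonneg h0 hint hbnd
    _ = K * ∫ ω, ‖c ω‖ ^ 2 ∂P := integral_const_mul K _
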